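/- Consider a homogeneous BNPG on the complete graph with n players and fix k with 0 < k < n such that Δg(k) ≤ Δg(k−1) and such that some k-PSNE exists. Let I×(k) = {i : c_i ≤ Δg(k−1)}, and let S ⊆ I×(k) be a set of k players of I×(k) with the k smallest costs. Then the profile investing exactly on S is a k-PSNE, and its social welfare SW(x) = Σ_i U_i(x) is at least the social welfare of every k-PSNE. -/
import Mathlib


/-- Finite difference `Δg(m) = g(m+1) − g(m)`. -/
def Δg (g : ℕ → ℝ) (m : ℕ) : ℝ := g (m + 1) - g m

/-- Number of investing neighbors of player `i` under profile `x` in graph `G`. -/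
noncomputable def nInv {V : Type*} (G : SimpleGraph V) (x : V → Bool) (i : V) : ℕ :=
  {j | G.Adj i j ∧ x j = true}.ncard

/-- Pure-strategy Nash equilibrium of the BNPG on `G` with externalities `g` and costs `c`. -/
def IsPSNE {V : Type*} (G : SimpleGraph V) (g : V → ℕ → ℝ) (c : V → ℝ)
    (x : V → Bool) : Prop :=
  ∀ i, (x i = true → c i ≤ Δg (g i) (nInv G x i)) ∧
       (x i = false → Δg (g i) (nInv G x i) ≤ c i)


/-- Social welfare: the sum of all players' utilities. -/
noncomputable def SW {V : Type*} [Fintype V] (G : SimpleGraph V) (g : V → ℕ → ℝ)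
    (c : V → ℝ) (x : V → Bool) : ℝ :=
  ∑ i, (g i ((if x i then 1 else 0) + nInv G x i) - c i * (if x i then 1 else 0))

open Finset in
lemma myN {n : ℕ} (x : Fin n → Bool) (i : Fin n) :
    (if x i = true then 1 else 0) + nInv (⊤ : SimpleGraph (Fin n)) x i
      = (univ.filter fun j => x j = true).card := by
  have h1 : nInv (⊤ : SimpleGraph (Fin n)) x i
      = (univ.filter fun j => j ≠ i ∧ x j = true).card := by
    unfold nInv
    rw [show {j | (⊤ : SimpleGraph (Fin n)).Adj i j ∧ x j = true}
        = ↑(univ.filter fun j => j ≠ i ∧ x j = true) by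
      ext j; simp [SimpleGraph.top_adj, ne_comm], Set.ncard_coe_finset]
  rw [h1]
  by_cases h : x i = true
  · have h2 : (univ.filter fun j => j ≠ i ∧ x j = true)
        = (univ.filter fun j => x j = true).erase i := by
      ext j; simp [Finset.mem_erase, and_comm]
    have h3 : i ∈ (univ.filter fun j => x j = true) := by simp [h]
    rw [h2, Finset.card_erase_of_mem h3]
    have := Finset.card_pos.mpr ⟨i, h3⟩
    simp [h]; omega
  · have h2 : (univ.filter fun j => j ≠ i ∧ x j = true)
        = (univ.filter fun j => x j = true) := by
      ext j; simp only [Finset.mem_filter, Finset.mem_univ, true_and]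
      constructor
      · exact fun hh => hh.2
      · intro hh; refine ⟨?_, hh⟩; rintro rfl; exact h hh
    simp [h, h2]

lemma ncard_true {n : ℕ} (x : Fin n → Bool) :
    {i : Fin n | x i = true}.ncard = (Finset.univ.filter fun j => x j = true).card := by
  rw [show {i : Fin n | x i = true} = ↑(Finset.univ.filter fun j => x j = true) by
    ext j; simp, Set.ncard_coe_finset]

open Finset in
lemma SW_top {n k : ℕ} (g : ℕ → ℝ) (c : Fin n → ℝ) (x : Fin n → Bool)
    (hk : (univ.filter fun j => x j = true).card = k) :
    SW (⊤ : SimpleGraph (Fin n)) (fun _ => g) c x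
      = n * g k - ∑ i ∈ univ.filter (fun j => x j = true), c i := by
  unfold SW
  have : ∀ i : Fin n, g ((if x i then 1 else 0) + nInv (⊤ : SimpleGraph (Fin n)) x i)
      - c i * (if x i then 1 else 0)
      = g k - (if x i = true then c i else 0) := by
    intro i
    have := myN x i
    by_cases h : x i = true <;> simp [h] at this ⊢ <;> rw [this, hk]
  rw [Finset.sum_congr rfl (fun i _ => this i), Finset.sum_sub_distrib,
    Finset.sum_const, Finset.sum_ite, Finset.sum_const]
  simp [mul_comm]


open Finset in
/-- homogeneous BNPG on the complete graph, `0 < k < n`, `Δg(k) ≤ Δg(k−1)`,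
and some `k`-PSNE exists.  If `S` consists of `k` players of `I×(k) = {i : c_i ≤ Δg(k−1)}`
with the `k` smallest costs, then investing exactly on `S` is a `k`-PSNE whose social
welfare is at least that of every `k`-PSNE. -/
theorem stmt6 (n k : ℕ) (hk0 : 0 < k) (hkn : k < n)
    (g : ℕ → ℝ) (hmono : Monotone g) (c : Fin n → ℝ)
    (hΔ : Δg g k ≤ Δg g (k - 1))
    (hex : ∃ y : Fin n → Bool,
        IsPSNE (⊤ : SimpleGraph (Fin n)) (fun _ => g) c y ∧ {i | y i = true}.ncard = k)
    (S : Finset (Fin n)) (hScard : S.card = k)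
    (hSsub : ∀ i ∈ S, c i ≤ Δg g (k - 1))
    (hSmin : ∀ i ∈ S, ∀ j : Fin n, c j ≤ Δg g (k - 1) → j ∉ S → c i ≤ c j) :
    IsPSNE (⊤ : SimpleGraph (Fin n)) (fun _ => g) c (fun i => decide (i ∈ S)) ∧
    {i : Fin n | (decide (i ∈ S) : Bool) = true}.ncard = k ∧
    (∀ y : Fin n → Bool,
      IsPSNE (⊤ : SimpleGraph (Fin n)) (fun _ => g) c y → {i | y i = true}.ncard = k →
      SW (⊤ : SimpleGraph (Fin n)) (fun _ => g) c y ≤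
        SW (⊤ : SimpleGraph (Fin n)) (fun _ => g) c (fun i => decide (i ∈ S))) := by
  set xS : Fin n → Bool := fun i => decide (i ∈ S) with hxS
  have hfS : (univ.filter fun j => xS j = true) = S := by ext j; simp [hxS]
  have hNS : (univ.filter fun j => xS j = true).card = k := by rw [hfS, hScard]
  -- general facts for any k-PSNE y
  have keyT : ∀ y : Fin n → Bool, IsPSNE (⊤ : SimpleGraph (Fin n)) (fun _ => g) c y →
      {i | y i = true}.ncard = k →
      (univ.filter fun j => y j = true).card = k ∧
      (∀ i ∈ univ.filter (fun j => y j = true), c i ≤ Δg g (k - 1)) ∧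
      (∀ i ∉ univ.filter (fun j => y j = true), Δg g k ≤ c i) := by
    intro y hy hyk
    rw [ncard_true] at hyk
    refine ⟨hyk, ?_, ?_⟩
    · intro i hi
      simp only [mem_filter, mem_univ, true_and] at hi
      have hn := myN y i
      rw [hyk] at hn; simp [hi] at hn
      have hm : nInv (⊤ : SimpleGraph (Fin n)) y i = k - 1 := by omega
      have h5 := (hy i).1 hi
      rwa [hm] at h5
    · intro i hi
      simp only [mem_filter, mem_univ, true_and] at hi
      have hif : y i = false := by simpa using hi
      have hn := myN y i
      rw [hyk] at hn; simp [hif] at hn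
      have := (hy i).2 hif
      rwa [hn] at this
  obtain ⟨y0, hy0, hy0k⟩ := hex
  obtain ⟨hT0card, hT0in, hT0out⟩ := keyT y0 hy0 hy0k
  set T0 := univ.filter (fun j => y0 j = true) with hT0
  refine ⟨?_, ?_, ?_⟩
  · intro i
    constructor
    · intro hi
      have hiS : i ∈ S := by simpa [hxS] using hi
      have hn := myN xS i
      rw [hNS] at hn
      simp only [hi, if_true] at hn
      have hm : nInv (⊤ : SimpleGraph (Fin n)) xS i = k - 1 := by omega
      show c i ≤ Δg g _
      rw [hm]
      exact hSsub i hiS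
    · intro hi
      have hiS : i ∉ S := by simpa [hxS] using hi
      have hn := myN xS i
      rw [hNS] at hn
      simp only [hi, Bool.false_eq_true, if_false] at hn
      have hm : nInv (⊤ : SimpleGraph (Fin n)) xS i = k := by omega
      show Δg g _ ≤ c i
      rw [hm]
      by_cases hc : c i ≤ Δg g (k - 1)
      · by_cases hiT : i ∈ T0
        · have hcards : (S \ T0).card = (T0 \ S).card :=
            Finset.card_sdiff_comm (hScard.trans hT0card.symm)
          have hne : (T0 \ S).Nonempty := ⟨i, Finset.mem_sdiff.mpr ⟨hiT, hiS⟩⟩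
          have h2 : (S \ T0).Nonempty :=
            Finset.card_pos.mp (by rw [hcards]; exact Finset.card_pos.mpr hne)
          obtain ⟨j, hj⟩ := h2
          obtain ⟨hjS, hjT⟩ := Finset.mem_sdiff.mp hj
          have h3 : Δg g k ≤ c j := hT0out j hjT
          have h4 : c j ≤ c i := hSmin j hjS i hc hiS
          linarith
        · exact hT0out i hiT
      · push_neg at hc; linarith
  · rw [ncard_true]; exact hNS
  · intro y hy hyk
    obtain ⟨hTc, hTin, hTout⟩ := keyT y hy hyk
    set T := univ.filter (fun j => y j = true) with hT
    rw [SW_top g c y hTc, SW_top g c xS hNS, hfS]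
    have key : ∑ i ∈ S, c i ≤ ∑ i ∈ T, c i := by
      rw [← Finset.sum_inter_add_sum_sdiff S T c, ← Finset.sum_inter_add_sum_sdiff T S c,
        Finset.inter_comm T S]
      have hcards : (S \ T).card = (T \ S).card :=
        Finset.card_sdiff_comm (hScard.trans hTc.symm)
      have hdiff : ∑ i ∈ S \ T, c i ≤ ∑ i ∈ T \ S, c i := by
        rw [← Finset.sum_coe_sort (S \ T) c, ← Finset.sum_coe_sort (T \ S) c]
        have e := Finset.equivOfCardEq hcards
        rw [← Equiv.sum_comp e (fun b : (T \ S : Finset (Fin n)) => c b)]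
        apply Finset.sum_le_sum
        intro a _
        obtain ⟨haS, haT⟩ := Finset.mem_sdiff.mp a.2
        obtain ⟨hbT, hbS⟩ := Finset.mem_sdiff.mp (e a).2
        exact hSmin a.1 haS (e a).1 (hTin _ hbT) hbS
      linarith
    linarith
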